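/- For an effective divisor C, any set S', and any sequence {A_i}, the lower bound |Δ ∩ I'| + |Δ' ∩ I| - |Δ'| of the main order-bound theorem attains its maximum when S equals the set of base points of C; in particular, for every index i ∈ Δ' one has C ∉ Γ_{P_i}, i.e., P_i is a base point of C. -/

import Mathlib

noncomputable section

/-- Degree of a divisor, where divisors on the curve are modeled as finitely
supported integer valued functions on the set of rational points. -/
def degr {Point : Type*} (D : Point →₀ ℤ) : ℤ := D.sum fun _ n => n

/-- An abstract model of a smooth projective absolutely irreducible curve over a field,
recording the data used in the paper: the dimension `l D` of the Riemann-Roch space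
`L(D)`, the genus `g`, a canonical divisor `K`, and linear equivalence `lin`,
together with their basic properties (Riemann-Roch, monotonicity, semigroup
properties of nongaps, etc.). -/
structure Curve (Point : Type*) where
  /-- `l D = dim L(D)` -/
  l : (Point →₀ ℤ) → ℕ
  /-- the genus -/
  g : ℕ
  /-- a canonical divisor -/
  K : Point →₀ ℤ
  /-- linear equivalence of divisors -/
  lin : (Point →₀ ℤ) → (Point →₀ ℤ) → Prop
  lin_refl : ∀ A, lin A A
  lin_symm : ∀ {A B}, lin A B → lin B A
  lin_trans : ∀ {A B C}, lin A B → lin B C → lin A C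
  lin_add : ∀ {A B} (E : Point →₀ ℤ), lin A B → lin (A + E) (B + E)
  deg_lin : ∀ {A B}, lin A B → degr A = degr B
  l_lin : ∀ {A B}, lin A B → l A = l B
  l_zero : l 0 = 1
  l_neg : ∀ {D}, degr D < 0 → l D = 0
  l_mono : ∀ (D : Point →₀ ℤ) (P : Point), l D ≤ l (D + Finsupp.single P 1)
  l_step : ∀ (D : Point →₀ ℤ) (P : Point), l (D + Finsupp.single P 1) ≤ l D + 1
  /-- Riemann-Roch -/
  rr : ∀ D : Point →₀ ℤ, (l D : ℤ) - l (K - D) = degr D + 1 - g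
  lin_of_deg_zero : ∀ {D}, l D ≠ 0 → degr D = 0 → lin D 0
  /-- the semigroup property of `Γ_P` -/
  gamma_add : ∀ (P : Point) {A B}, l A ≠ l (A - Finsupp.single P 1) →
      l B ≠ l (B - Finsupp.single P 1) → l (A + B) ≠ l (A + B - Finsupp.single P 1)
  eff_add : ∀ {A B}, l A ≠ 0 → l B ≠ 0 → l (A + B) ≠ 0
  point_nongap : ∀ {P Q : Point}, P ≠ Q →
      l (Finsupp.single P 1) ≠ l (Finsupp.single P 1 - Finsupp.single Q 1)

variable {Point : Type*}

/-- `Γ_P` : divisor (classes) with no base point at `P`, i.e. `L(A) ≠ L(A-P)`. -/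
def GammaP (X : Curve Point) (P : Point) : Set (Point →₀ ℤ) :=
  {A | X.l A ≠ X.l (A - Finsupp.single P 1)}

/-- `Γ_S = ∩_{P ∈ S} Γ_P`, with the convention `Γ_∅ = Γ = {A : L(A) ≠ 0}`. -/
def GammaS (X : Curve Point) (S : Finset Point) : Set (Point →₀ ℤ) :=
  {A | (S = ∅ → X.l A ≠ 0) ∧ ∀ P ∈ S, A ∈ GammaP X P}

/-- `Γ(C; S, S') = {A : A ∈ Γ_S and A - C ∈ Γ_{S'}}`. -/
def GammaSet (X : Curve Point) (C : Point →₀ ℤ) (S S' : Finset Point) :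
    Set (Point →₀ ℤ) :=
  {A | A ∈ GammaS X S ∧ A - C ∈ GammaS X S'}

/-- `γ(C; S, S') = min {deg A : A ∈ Γ(C; S, S')}`. -/
def gammaMin (X : Curve Point) (C : Point →₀ ℤ) (S S' : Finset Point) : ℤ :=
  sInf (degr '' GammaSet X C S S')

/-- `Δ = {i : A_i ∈ Γ_{P_i} and A_i - C ∉ Γ_{P_i}}` for indices `1 ≤ i ≤ n`. -/
def Delta (X : Curve Point) (C : Point →₀ ℤ) (n : ℕ) (A : ℕ → Point →₀ ℤ)
    (P : ℕ → Point) : Set ℕ :=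
  {i | 1 ≤ i ∧ i ≤ n ∧ A i ∈ GammaP X (P i) ∧ A i - C ∉ GammaP X (P i)}

/-- `Δ' = {i : A_i ∉ Γ_{P_i} and A_i - C ∈ Γ_{P_i}}` for indices `1 ≤ i ≤ n`. -/
def Delta' (X : Curve Point) (C : Point →₀ ℤ) (n : ℕ) (A : ℕ → Point →₀ ℤ)
    (P : ℕ → Point) : Set ℕ :=
  {i | 1 ≤ i ∧ i ≤ n ∧ A i ∉ GammaP X (P i) ∧ A i - C ∈ GammaP X (P i)}

/-- For an effective divisor `C`, any set `S'`, and any sequence `{A_i}` with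
`A_i = A_{i-1} + P_i`, the lower bound `|Δ ∩ I'| + |Δ' ∩ I| - |Δ'|` of the main
order-bound theorem attains its maximum when `S` equals the set of base points of `C`;
in particular for every `i ∈ Δ'` one has `C ∉ Γ_{P_i}`, i.e. `P_i` is a base point
of `C`. -/
theorem optimal_S_base_points (X : Curve Point) (C : Point →₀ ℤ) (hC : 0 ≤ C)
    (S' : Finset Point) (n : ℕ) (A : ℕ → Point →₀ ℤ) (P : ℕ → Point)
    (hA : ∀ i, 1 ≤ i → i ≤ n → A i = A (i - 1) + Finsupp.single (P i) 1) :
    (∀ i ∈ Delta' X C n A P, C ∉ GammaP X (P i)) ∧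
    ∀ S : Finset Point,
      ((Delta X C n A P ∩ {i | P i ∈ S'}).ncard : ℤ)
          + ((Delta' X C n A P ∩ {i | P i ∈ S}).ncard : ℤ)
          - ((Delta' X C n A P).ncard : ℤ)
        ≤ ((Delta X C n A P ∩ {i | P i ∈ S'}).ncard : ℤ)
          + ((Delta' X C n A P ∩ {i | C ∉ GammaP X (P i)}).ncard : ℤ)
          - ((Delta' X C n A P).ncard : ℤ) := by
  have key : ∀ i ∈ Delta' X C n A P, C ∉ GammaP X (P i) := by
    intro i hi hCmem
    obtain ⟨-, -, hAi, hACi⟩ := hi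
    apply hAi
    have := X.gamma_add (P i) hACi hCmem
    simpa [GammaP] using this
  refine ⟨key, fun S => ?_⟩
  have hfin : (Delta' X C n A P).Finite := by
    apply Set.Finite.subset (Set.finite_Icc 1 n)
    rintro i ⟨h1, h2, -⟩
    exact ⟨h1, h2⟩
  have hsub : Delta' X C n A P ∩ {i | P i ∈ S} ⊆
      Delta' X C n A P ∩ {i | C ∉ GammaP X (P i)} := by
    rintro i ⟨hi, -⟩
    exact ⟨hi, key i hi⟩
  have := Set.ncard_le_ncard hsub (hfin.inter_of_left _)
  omega
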